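/- (Limit of the rescaled cell length, step (a) in the proof of Prop. 4.3.) Let l : (0,1) → ℝ be continuously differentiable with l(t) ≥ l_0 > 0 for all t. Let x ∈ (0,1) satisfy x·l'(x) ≠ l(x). Let ε_n → 0⁺, let p_n be natural numbers, and let a_n, b_n ∈ (0,1) with a_n < b_n, a_n → x, b_n → x, a_n = ε_n p_n l(a_n), and b_n = ε_n (p_n + 1) l(b_n). Then for all sufficiently large n one has 1 − (a_n/l(a_n))·((l(b_n) − l(a_n))/(b_n − a_n)) ≠ 0, and (b_n − a_n)/(ε_n l(a_n)) → (1 − x·l'(x)/l(x))^{−1} as n → ∞. -/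

import Mathlib

open MeasureTheory Set Filter Topology

noncomputable section

/-- The thin domain `R^ε = {(x,y) : x ∈ (0,1), 0 < y < ε G(x, x/ε)}`. -/
def thinDomain (G : ℝ → ℝ → ℝ) (ε : ℝ) : Set (ℝ × ℝ) :=
  {z : ℝ × ℝ | z.1 ∈ Ioo (0 : ℝ) 1 ∧ z.2 ∈ Ioo (0 : ℝ) (ε * G z.1 (z.1 / ε))}

/-- The reference cell `Y* = (0,l₁) × (0,G₁)`. -/
def Ystar (l1 G1 : ℝ) : Set (ℝ × ℝ) := Ioo (0 : ℝ) l1 ×ˢ Ioo (0 : ℝ) G1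

/-- A partition `0 = x₀ < x₁ < ⋯ < x_{N+1} = 1` of the interval `(0,1)` (for a parameter `ε`). -/
structure CellPartition where
  N : ℕ
  pts : ℕ → ℝ
  pts_zero : pts 0 = 0
  pts_last : pts (N + 1) = 1
  pts_lt : ∀ k ≤ N, pts k < pts (k + 1)

/-- The index `k` such that `x ∈ [x_k, x_{k+1})` (for `x ∈ [0,1)`). -/
def CellPartition.idx (P : CellPartition) (x : ℝ) : ℕ :=
  Nat.findGreatest (fun k => P.pts k ≤ x) P.N

/-- `[x]_ε`, the partition point just below `x`. -/
def CellPartition.bracket (P : CellPartition) (x : ℝ) : ℝ := P.pts (P.idx x)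

/-- `Γ_{[x]_ε} = (x_{k+1} - x_k) / l(x_k)` for `x ∈ [x_k, x_{k+1})`. -/
def CellPartition.Gamma (P : CellPartition) (l : ℝ → ℝ) (x : ℝ) : ℝ :=
  (P.pts (P.idx x + 1) - P.pts (P.idx x)) / l (P.pts (P.idx x))

/-- The unfolding operator `T_ε` associated to a partition, acting on a function `φ` on `R^ε`
(extended by zero to all of `ℝ²` via the indicator of `R^ε`). -/
def unfoldOp (G : ℝ → ℝ → ℝ) (l : ℝ → ℝ) (ε : ℝ) (P : CellPartition)
    (φ : ℝ × ℝ → ℝ) : ℝ × ℝ × ℝ → ℝ := fun q =>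
  if q.2.1 < l (P.bracket q.1) then
    (thinDomain G ε).indicator φ (P.bracket q.1 + P.Gamma l q.1 * q.2.1, ε * q.2.2)
  else 0

/-- The averaging operator `U_ε`, the formal adjoint of `T_ε`. -/
def avgOp (l : ℝ → ℝ) (ε : ℝ) (P : CellPartition) (ψ : ℝ × ℝ × ℝ → ℝ) : ℝ × ℝ → ℝ := fun z =>
  (1 / l (P.bracket z.1)) *
    ∫ y₁ in Ioo (0 : ℝ) (l (P.bracket z.1)),
      ψ (P.bracket z.1 + P.Gamma l z.1 * y₁, (z.1 - P.bracket z.1) / P.Gamma l z.1, z.2 / ε)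

/-- The limit set `W = {(x,y₁,y₂) : x ∈ (0,1), 0 < y₁ < l(x), 0 < y₂ < G(x,y₁)}`. -/
def Wset (G : ℝ → ℝ → ℝ) (l : ℝ → ℝ) : Set (ℝ × ℝ × ℝ) :=
  {q | q.1 ∈ Ioo (0 : ℝ) 1 ∧ q.2.1 ∈ Ioo (0 : ℝ) (l q.1) ∧ q.2.2 ∈ Ioo (0 : ℝ) (G q.1 q.2.1)}

/-- The set `W₀ = {(x,y₁) : x ∈ (0,1), 0 < y₁ < l(x)}`. -/
def W0set (l : ℝ → ℝ) : Set (ℝ × ℝ) :=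
  {z : ℝ × ℝ | z.1 ∈ Ioo (0 : ℝ) 1 ∧ z.2 ∈ Ioo (0 : ℝ) (l z.1)}

/-- Limit of the rescaled cell length (step (a) in the proof of Prop. 4.3). -/
theorem rescaled_cell_length_limit
    (l0 : ℝ) (hl0 : 0 < l0)
    (l : ℝ → ℝ) (hlC1 : ContDiffOn ℝ 1 l (Ioo 0 1))
    (hlb : ∀ t ∈ Ioo (0 : ℝ) 1, l0 ≤ l t)
    (x : ℝ) (hx : x ∈ Ioo (0 : ℝ) 1) (hnd : x * deriv l x ≠ l x)
    (ε : ℕ → ℝ) (hεpos : ∀ n, 0 < ε n) (hε : Tendsto ε atTop (𝓝 0))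
    (p : ℕ → ℕ) (a b : ℕ → ℝ)
    (ha : ∀ n, a n ∈ Ioo (0 : ℝ) 1) (hb : ∀ n, b n ∈ Ioo (0 : ℝ) 1)
    (hab : ∀ n, a n < b n)
    (hax : Tendsto a atTop (𝓝 x)) (hbx : Tendsto b atTop (𝓝 x))
    (haeq : ∀ n, a n = ε n * (p n : ℝ) * l (a n))
    (hbeq : ∀ n, b n = ε n * ((p n : ℝ) + 1) * l (b n))
    : (∀ᶠ n in atTop,
        1 - a n / l (a n) * ((l (b n) - l (a n)) / (b n - a n)) ≠ 0) ∧
      Tendsto (fun n => (b n - a n) / (ε n * l (a n))) atTop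
        (𝓝 (1 - x * deriv l x / l x)⁻¹) := by
  obtain ⟨hx0, hx1⟩ := hx
  have hopen : IsOpen (Ioo (0:ℝ) 1) := isOpen_Ioo
  have hlx : 0 < l x := lt_of_lt_of_le hl0 (hlb x ⟨hx0, hx1⟩)
  have hla : ∀ n, 0 < l (a n) := fun n => lt_of_lt_of_le hl0 (hlb _ (ha n))
  have hlbn : ∀ n, 0 < l (b n) := fun n => lt_of_lt_of_le hl0 (hlb _ (hb n))
  have hba : ∀ n, (0:ℝ) < b n - a n := fun n => sub_pos.2 (hab n)
  -- key identity
  have key : ∀ n, 1 - a n / l (a n) * ((l (b n) - l (a n)) / (b n - a n))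
      = ε n * l (b n) / (b n - a n) := by
    intro n
    have h1 := haeq n
    have h2 := hbeq n
    have hba' : b n - a n ≠ 0 := (hba n).ne'
    field_simp [hba', (hla n).ne']
    linear_combination ((l (a n)) * h2 - (l (b n)) * h1)
  have hDpos : ∀ n, 0 < ε n * l (b n) / (b n - a n) := fun n =>
    div_pos (mul_pos (hεpos n) (hlbn n)) (hba n)
  -- continuity and differentiability
  have hcont : ContinuousOn l (Ioo 0 1) := hlC1.continuousOn
  have hdiff : ∀ t ∈ Ioo (0:ℝ) 1, DifferentiableAt ℝ l t := fun t ht =>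
    (hlC1.differentiableOn one_ne_zero).differentiableAt (hopen.mem_nhds ht)
  have hsub : ∀ n, Icc (a n) (b n) ⊆ Ioo (0:ℝ) 1 := fun n =>
    Icc_subset_Ioo (ha n).1 (hb n).2
  have hmvt : ∀ n, ∃ c ∈ Ioo (a n) (b n),
      deriv l c = (l (b n) - l (a n)) / (b n - a n) := by
    intro n
    exact exists_deriv_eq_slope l (hab n) (hcont.mono (hsub n))
      (fun t ht => (hdiff t (hsub n (Ioo_subset_Icc_self ht))).differentiableWithinAt)
  choose c hc hceq using hmvt
  have hcx : Tendsto c atTop (𝓝 x) :=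
    tendsto_of_tendsto_of_tendsto_of_le_of_le hax hbx
      (fun n => (hc n).1.le) (fun n => (hc n).2.le)
  have hderiv_cont : ContinuousAt (deriv l) x :=
    (hlC1.continuousOn_deriv_of_isOpen hopen le_rfl).continuousAt
      (hopen.mem_nhds ⟨hx0, hx1⟩)
  have hQ : Tendsto (fun n => (l (b n) - l (a n)) / (b n - a n)) atTop
      (𝓝 (deriv l x)) := by
    have : Tendsto (fun n => deriv l (c n)) atTop (𝓝 (deriv l x)) :=
      hderiv_cont.tendsto.comp hcx
    simpa only [hceq] using this
  have hlcont : ContinuousAt l x := hcont.continuousAt (hopen.mem_nhds ⟨hx0, hx1⟩)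
  have hla_lim : Tendsto (fun n => l (a n)) atTop (𝓝 (l x)) :=
    hlcont.tendsto.comp hax
  have hlb_lim : Tendsto (fun n => l (b n)) atTop (𝓝 (l x)) :=
    hlcont.tendsto.comp hbx
  have hDlim : Tendsto (fun n => 1 - a n / l (a n) * ((l (b n) - l (a n)) / (b n - a n)))
      atTop (𝓝 (1 - x * deriv l x / l x)) := by
    have : Tendsto (fun n => 1 - a n / l (a n) * ((l (b n) - l (a n)) / (b n - a n)))
        atTop (𝓝 (1 - x / l x * deriv l x)) :=
      tendsto_const_nhds.sub ((hax.div hla_lim hlx.ne').mul hQ)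
    convert this using 2
    ring
  have hL : 1 - x * deriv l x / l x ≠ 0 := by
    intro h
    apply hnd
    have : x * deriv l x / l x = 1 := by linarith
    field_simp at this
    linarith
  have hD2 : Tendsto (fun n => ε n * l (b n) / (b n - a n)) atTop
      (𝓝 (1 - x * deriv l x / l x)) := by
    have := hDlim
    rwa [show (fun n => 1 - a n / l (a n) * ((l (b n) - l (a n)) / (b n - a n)))
      = fun n => ε n * l (b n) / (b n - a n) from funext key] at this
  constructor
  · filter_upwards with n
    rw [key n]
    exact (hDpos n).ne'
  · have heqfun : (fun n => (b n - a n) / (ε n * l (a n)))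
        = fun n => l (b n) / l (a n) * (ε n * l (b n) / (b n - a n))⁻¹ := by
      funext n
      rw [eq_comm]
      field_simp [(hεpos n).ne', (hla n).ne', (hlbn n).ne', (hba n).ne']
    rw [heqfun]
    have := (hlb_lim.div hla_lim hlx.ne').mul (hD2.inv₀ hL)
    simpa [div_self hlx.ne'] using this
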